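/- Let p : ℝ^{n+1} → ℝ be a homogeneous polynomial of degree d. Then the Laplace–Beltrami operator of the round unit sphere S^n applied to the restriction p|_{S^n} satisfies Δ_{S^n}(p|_{S^n}) = (Δ_{ℝ^{n+1}} p)|_{S^n} − d(d+n−1) · p|_{S^n}. -/

import Mathlib

noncomputable section

open MvPolynomial Filter Topology

/-- The Euclidean Laplacian `Δf = ∑ᵢ ∂²f/∂xᵢ²` of `f : ℝ^{n+1} → ℝ`. -/
def euclideanLaplacian {n : ℕ} (f : EuclideanSpace ℝ (Fin (n + 1)) → ℝ)
    (x : EuclideanSpace ℝ (Fin (n + 1))) : ℝ :=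
  ∑ i : Fin (n + 1),
    fderiv ℝ (fun y => fderiv ℝ f y (EuclideanSpace.single i 1)) x
      (EuclideanSpace.single i 1)

/-- The Laplace–Beltrami operator of the round unit sphere `Sⁿ ⊂ ℝ^{n+1}`, computed via
the degree-zero homogeneous extension: `Δ_{Sⁿ} f (x) = Δ(y ↦ f(y/‖y‖))(x)` for `‖x‖ = 1`. -/
def sphereLaplacian {n : ℕ} (f : EuclideanSpace ℝ (Fin (n + 1)) → ℝ)
    (x : EuclideanSpace ℝ (Fin (n + 1))) : ℝ :=
  euclideanLaplacian (fun y => f (‖y‖⁻¹ • y)) x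



variable {N : ℕ}

/-- evaluation of a polynomial on Euclidean space -/
def ev (p : MvPolynomial (Fin (N + 1)) ℝ) (y : EuclideanSpace ℝ (Fin (N + 1))) : ℝ :=
  MvPolynomial.eval (fun i => y i) p

/-- the derivative of `ev p` at `y` -/
def Lp (p : MvPolynomial (Fin (N + 1)) ℝ) (y : EuclideanSpace ℝ (Fin (N + 1))) :
    EuclideanSpace ℝ (Fin (N + 1)) →L[ℝ] ℝ :=
  ∑ i : Fin (N + 1), ev (pderiv i p) y • EuclideanSpace.proj i

lemma Lp_apply (p : MvPolynomial (Fin (N + 1)) ℝ) (y v : EuclideanSpace ℝ (Fin (N + 1))) :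
    Lp p y v = ∑ i : Fin (N + 1), ev (pderiv i p) y * v i := by
  simp [Lp, ContinuousLinearMap.sum_apply]

lemma hasFDerivAt_ev (p : MvPolynomial (Fin (N + 1)) ℝ) (y : EuclideanSpace ℝ (Fin (N + 1))) :
    HasFDerivAt (ev p) (Lp p y) y := by
  induction p using MvPolynomial.induction_on with
  | C a =>
      have : Lp (C a : MvPolynomial (Fin (N + 1)) ℝ) y = 0 := by
        ext v; simp [Lp_apply, ev]
      rw [this]
      have : ev (C a : MvPolynomial (Fin (N + 1)) ℝ) = fun _ => a := by
        funext z; simp [ev]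
      rw [this]
      exact hasFDerivAt_const a y
  | add p q hp hq =>
      have : Lp (p + q) y = Lp p y + Lp q y := by
        ext v; simp [Lp_apply, ev, Finset.sum_add_distrib, add_mul]
      rw [this]
      have : ev (p + q) = fun z => ev p z + ev q z := by funext z; simp [ev]
      rw [this]
      exact hp.add hq
  | mul_X p i hp =>
      have h2 : HasFDerivAt (fun z : EuclideanSpace ℝ (Fin (N + 1)) => z i)
          (EuclideanSpace.proj (𝕜 := ℝ) i) y := by
        have := (EuclideanSpace.proj (𝕜 := ℝ) (ι := Fin (N + 1)) i).hasFDerivAt (x := y)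
        simpa [PiLp.proj_apply] using this
      have hmul := hp.mul h2
      have heq : ev (p * X i) = fun z => ev p z * z i := by funext z; simp [ev]
      rw [heq]
      have hL : Lp (p * X i) y
          = ev p y • EuclideanSpace.proj (𝕜 := ℝ) i + y i • Lp p y := by
        ext v
        have hterm : ∀ j, ev (pderiv j (p * X i)) y * v j
            = ev (pderiv j p) y * y i * v j + (if j = i then ev p y * v j else 0) := by
          intro j
          rcases eq_or_ne j i with h | h
          · subst h
            rw [pderiv_mul, pderiv_X_self]
            simp only [ev, map_add, map_mul, eval_X, mul_one, if_true]
            ring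
          · rw [pderiv_mul, pderiv_X_of_ne (Ne.symm h)]
            simp only [ev, map_add, map_mul, eval_X, mul_zero, add_zero, if_neg h]
        simp only [Lp_apply, hterm, Finset.sum_add_distrib, Finset.sum_ite_eq',
          Finset.mem_univ, if_true, ContinuousLinearMap.add_apply,
          ContinuousLinearMap.coe_smul', Pi.smul_apply, PiLp.proj_apply, smul_eq_mul,
          Lp_apply, Finset.mul_sum]
        rw [add_comm]
        congr 1
        exact Finset.sum_congr rfl fun j _ => by ring
      rw [hL]
      exact hmul


lemma Lp_single (p : MvPolynomial (Fin (N + 1)) ℝ) (y : EuclideanSpace ℝ (Fin (N + 1)))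
    (i : Fin (N + 1)) : Lp p y (EuclideanSpace.single i 1) = ev (pderiv i p) y := by
  rw [Lp_apply]
  have : ∀ j, ev (pderiv j p) y * (EuclideanSpace.single i (1:ℝ)) j
      = if j = i then ev (pderiv j p) y else 0 := by
    intro j
    rw [EuclideanSpace.single_apply]
    split <;> simp
  simp only [this, Finset.sum_ite_eq', Finset.mem_univ, if_true]

/-- the polynomial `∑ Xᵢ²` -/
def qpoly (N : ℕ) : MvPolynomial (Fin (N + 1)) ℝ := ∑ i : Fin (N + 1), X i ^ 2

lemma ev_qpoly (y : EuclideanSpace ℝ (Fin (N + 1))) : ev (qpoly N) y = ‖y‖ ^ 2 := by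
  have h : ‖y‖ ^ 2 = ∑ i, y i ^ 2 := by
    rw [EuclideanSpace.norm_eq, Real.sq_sqrt (Finset.sum_nonneg fun i _ => sq_nonneg _)]
    simp [Real.norm_eq_abs, sq_abs]
  rw [h]
  simp [ev, qpoly]

lemma pderiv_qpoly (i : Fin (N + 1)) : pderiv i (qpoly N) = C 2 * X i := by
  rw [qpoly, map_sum]
  have : ∀ j : Fin (N + 1), pderiv i (X j ^ 2 : MvPolynomial (Fin (N + 1)) ℝ)
      = if j = i then C 2 * X i else 0 := by
    intro j
    rcases eq_or_ne j i with h | h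
    · subst h
      rw [sq, pderiv_mul, pderiv_X_self, if_pos rfl, one_mul, mul_one]
      have h2 : (C 2 : MvPolynomial (Fin (N + 1)) ℝ) = 2 :=
        map_ofNat (C : ℝ →+* MvPolynomial (Fin (N + 1)) ℝ) 2
      rw [h2]; ring
    · rw [pderiv_pow, pderiv_X_of_ne h, if_neg h, mul_zero]
  simp only [this, Finset.sum_ite_eq', Finset.mem_univ, if_true]

/-- `F e p y = (∑ yᵢ²)^e * p(y)` -/
def Fh (e : ℝ) (p : MvPolynomial (Fin (N + 1)) ℝ) (y : EuclideanSpace ℝ (Fin (N + 1))) : ℝ :=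
  ev (qpoly N) y ^ e * ev p y

lemma hasFDerivAt_Fh (e : ℝ) (p : MvPolynomial (Fin (N + 1)) ℝ)
    {y : EuclideanSpace ℝ (Fin (N + 1))} (hy : 0 < ev (qpoly N) y) :
    HasFDerivAt (Fh e p)
      ((ev (qpoly N) y ^ e) • Lp p y
        + (ev p y * (e * ev (qpoly N) y ^ (e - 1))) • Lp (qpoly N) y) y := by
  have h1 : HasDerivAt (fun t : ℝ => t ^ e) (e * ev (qpoly N) y ^ (e - 1)) (ev (qpoly N) y) :=
    Real.hasDerivAt_rpow_const (Or.inl hy.ne')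
  have h2 := h1.comp_hasFDerivAt y (hasFDerivAt_ev (qpoly N) y)
  have h3 := h2.mul (hasFDerivAt_ev p y)
  have heq : ((ev (qpoly N) y ^ e) • Lp p y
        + (ev p y * (e * ev (qpoly N) y ^ (e - 1))) • Lp (qpoly N) y)
      = (((fun t : ℝ => t ^ e) ∘ ev (qpoly N)) y • Lp p y
        + ev p y • (e * ev (qpoly N) y ^ (e - 1)) • Lp (qpoly N) y) := by
    rw [smul_smul]; rfl
  rw [heq]
  exact h3

lemma fderiv_Fh_apply (e : ℝ) (p : MvPolynomial (Fin (N + 1)) ℝ) (i : Fin (N + 1))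
    {y : EuclideanSpace ℝ (Fin (N + 1))} (hy : 0 < ev (qpoly N) y) :
    fderiv ℝ (Fh e p) y (EuclideanSpace.single i 1)
      = Fh (e - 1) (C e * pderiv i (qpoly N) * p) y + Fh e (pderiv i p) y := by
  rw [(hasFDerivAt_Fh e p hy).fderiv]
  simp only [ContinuousLinearMap.add_apply, ContinuousLinearMap.coe_smul', Pi.smul_apply,
    Lp_single, smul_eq_mul, Fh]
  simp only [ev, map_mul, eval_C]
  ring

lemma isOpen_pos_ev_qpoly : IsOpen {y : EuclideanSpace ℝ (Fin (N + 1)) | 0 < ev (qpoly N) y} := by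
  have : {y : EuclideanSpace ℝ (Fin (N + 1)) | 0 < ev (qpoly N) y}
      = {y : EuclideanSpace ℝ (Fin (N + 1)) | 0 < ‖y‖ ^ 2} := by
    ext y; simp [ev_qpoly]
  rw [this]
  exact isOpen_lt continuous_const (continuous_norm.pow 2)

lemma fderiv2_Fh (e : ℝ) (p : MvPolynomial (Fin (N + 1)) ℝ) (i : Fin (N + 1))
    {x : EuclideanSpace ℝ (Fin (N + 1))} (hx : 0 < ev (qpoly N) x) :
    fderiv ℝ (fun y => fderiv ℝ (Fh e p) y (EuclideanSpace.single i 1)) x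
        (EuclideanSpace.single i 1)
      = (Fh (e - 1 - 1) (C (e - 1) * pderiv i (qpoly N) * (C e * pderiv i (qpoly N) * p)) x
          + Fh (e - 1) (pderiv i (C e * pderiv i (qpoly N) * p)) x)
        + (Fh (e - 1) (C e * pderiv i (qpoly N) * pderiv i p) x
          + Fh e (pderiv i (pderiv i p)) x) := by
  set r := C e * pderiv i (qpoly N) * p with hr
  set s := pderiv i p with hs
  have hev : (fun y => fderiv ℝ (Fh e p) y (EuclideanSpace.single i 1))
      =ᶠ[nhds x] fun y => Fh (e - 1) r y + Fh e s y := by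
    filter_upwards [isOpen_pos_ev_qpoly.mem_nhds hx] with y hy
    exact fderiv_Fh_apply e p i hy
  rw [hev.fderiv_eq]
  rw [(show HasFDerivAt (fun y => Fh (e - 1) r y + Fh e s y) _ x from
    (hasFDerivAt_Fh (e - 1) r hx).add (hasFDerivAt_Fh e s hx)).fderiv]
  simp only [ContinuousLinearMap.add_apply, ContinuousLinearMap.coe_smul', Pi.smul_apply,
    Lp_single, smul_eq_mul, Fh]
  simp only [ev, map_mul, eval_C]
  ring

lemma lap_congr {f g : EuclideanSpace ℝ (Fin (N + 1)) → ℝ} {x : EuclideanSpace ℝ (Fin (N + 1))}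
    (h : f =ᶠ[nhds x] g) : euclideanLaplacian f x = euclideanLaplacian g x := by
  unfold euclideanLaplacian
  refine Finset.sum_congr rfl fun i _ => ?_
  have h1 : (fun y => fderiv ℝ f y (EuclideanSpace.single i 1))
      =ᶠ[nhds x] fun y => fderiv ℝ g y (EuclideanSpace.single i 1) := by
    filter_upwards [h.eventually_nhds] with y hy
    rw [Filter.EventuallyEq.fderiv_eq hy]
  rw [h1.fderiv_eq]

lemma X_mul_pderiv_monomial (i : Fin (N + 1)) (m : Fin (N + 1) →₀ ℕ) (a : ℝ) :
    X i * pderiv i (monomial m a) = C ((m i : ℝ)) * monomial m a := by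
  rw [pderiv_monomial, C_mul_monomial]
  rcases Nat.eq_zero_or_pos (m i) with h | h
  · simp [h]
  · have hmm : Finsupp.single i 1 + (m - Finsupp.single i 1) = m := by
      ext j
      rcases eq_or_ne j i with hj | hj
      · subst hj
        simp only [Finsupp.add_apply, Finsupp.single_eq_same, Finsupp.tsub_apply]
        omega
      · simp [Finsupp.single_apply, (Ne.symm hj)]
    have hX : (X i : MvPolynomial (Fin (N + 1)) ℝ) = monomial (Finsupp.single i 1) 1 := by
      rw [← X_pow_eq_monomial, pow_one]
    rw [hX, monomial_mul, one_mul, hmm]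
    congr 1
    ring

lemma euler_poly {p : MvPolynomial (Fin (N + 1)) ℝ} {d : ℕ} (hp : p.IsHomogeneous d) :
    ∑ i : Fin (N + 1), X i * pderiv i p = C (d : ℝ) * p := by
  have h1 : ∀ i, X i * pderiv i p
      = ∑ v ∈ p.support, C ((v i : ℝ)) * monomial v (coeff v p) := by
    intro i
    conv_lhs => rw [p.as_sum]
    rw [map_sum, Finset.mul_sum]
    exact Finset.sum_congr rfl fun v _ => X_mul_pderiv_monomial i v _
  rw [Finset.sum_congr rfl fun i _ => h1 i, Finset.sum_comm]
  have h2 : ∀ v ∈ p.support,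
      ∑ i : Fin (N + 1), C ((v i : ℝ)) * monomial v (coeff v p)
        = C (d : ℝ) * monomial v (coeff v p) := by
    intro v hv
    rw [← Finset.sum_mul, ← map_sum]
    have hd : v.degree = d := by
      rw [Finsupp.degree_eq_weight_one]
      exact hp (mem_support_iff.mp hv)
    have hsum : ∑ i : Fin (N + 1), v i = d := by
      rw [← hd, Finsupp.degree]
      exact (Finset.sum_subset (Finset.subset_univ v.support)
        (fun x _ hx => Finsupp.notMem_support_iff.mp hx)).symm
    have : ∑ i : Fin (N + 1), ((v i : ℝ)) = (d : ℝ) := by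
      rw [← hsum, Nat.cast_sum]
    rw [this]
  rw [Finset.sum_congr rfl h2, ← Finset.mul_sum, ← p.as_sum]

lemma euler_eval {p : MvPolynomial (Fin (N + 1)) ℝ} {d : ℕ} (hp : p.IsHomogeneous d)
    (y : EuclideanSpace ℝ (Fin (N + 1))) :
    ∑ i : Fin (N + 1), y i * ev (pderiv i p) y = d * ev p y := by
  have := congrArg (MvPolynomial.eval fun i => y i) (euler_poly hp)
  simpa [ev, map_sum] using this

lemma ev_qpoly' (y : EuclideanSpace ℝ (Fin (N + 1))) :
    ev (qpoly N) y = ∑ i, y i ^ 2 := by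
  simp [ev, qpoly]

lemma lap_Fh (e : ℝ) {d : ℕ} {p : MvPolynomial (Fin (N + 1)) ℝ} (hp : p.IsHomogeneous d)
    {x : EuclideanSpace ℝ (Fin (N + 1))} (hx : ‖x‖ = 1) :
    euclideanLaplacian (Fh e p) x
      = (4*e*(e-1) + 2*e*(N+1) + 4*e*d) * ev p x
        + ∑ i, ev (pderiv i (pderiv i p)) x := by
  have hq1 : ev (qpoly N) x = 1 := by rw [ev_qpoly, hx]; norm_num
  have hqpos : 0 < ev (qpoly N) x := by rw [hq1]; norm_num
  have hsum : ∑ i, x i ^ 2 = 1 := by rw [← ev_qpoly', hq1]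
  have heuler := euler_eval hp x
  unfold euclideanLaplacian
  rw [Finset.sum_congr rfl fun i _ => fderiv2_Fh e p i hqpos]
  simp only [Fh, hq1, Real.one_rpow, one_mul, pderiv_qpoly, pderiv_C_mul, pderiv_mul,
    pderiv_C, pderiv_X_self, zero_mul, zero_add, mul_one]
  simp only [ev, map_mul, map_add, eval_C, eval_X]
  ring_nf
  have e1 : ∀ i : Fin (N + 1),
      (e * x i * (MvPolynomial.eval fun j => x j) (pderiv i p) * 4 -
          e * x i ^ 2 * (MvPolynomial.eval fun j => x j) p * 4 +
        e * (MvPolynomial.eval fun j => x j) p * 2 +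
        e ^ 2 * x i ^ 2 * (MvPolynomial.eval fun j => x j) p * 4 +
        (MvPolynomial.eval fun j => x j) (pderiv i (pderiv i p)))
      = (4 * e) * (x i * ev (pderiv i p) x)
        + (4 * e ^ 2 - 4 * e) * (x i ^ 2 * ev p x) + 2 * e * ev p x
        + ev (pderiv i (pderiv i p)) x := by
    intro i
    simp only [ev]
    ring
  rw [Finset.sum_congr rfl fun i _ => e1 i]
  rw [Finset.sum_add_distrib, Finset.sum_add_distrib, Finset.sum_add_distrib]
  rw [← Finset.mul_sum, ← Finset.mul_sum, heuler]
  rw [← Finset.sum_mul, hsum, one_mul, Finset.sum_const, Finset.card_univ,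
    Fintype.card_fin, nsmul_eq_mul]
  simp only [ev]
  push_cast
  ring

lemma eval_smul_hom {p : MvPolynomial (Fin (N + 1)) ℝ} {d : ℕ} (hp : p.IsHomogeneous d)
    (c : ℝ) (f : Fin (N + 1) → ℝ) :
    MvPolynomial.eval (fun i => c * f i) p = c ^ d * MvPolynomial.eval f p := by
  conv_lhs => rw [p.as_sum]
  conv_rhs => rw [p.as_sum]
  rw [map_sum, map_sum, Finset.mul_sum]
  refine Finset.sum_congr rfl fun v hv => ?_
  rw [eval_monomial, eval_monomial]
  have hdeg : ∑ i ∈ v.support, v i = d := by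
    have hd : v.degree = d := by
      rw [Finsupp.degree_eq_weight_one]
      exact hp (mem_support_iff.mp hv)
    rw [← hd]; rfl
  rw [Finsupp.prod, Finsupp.prod]
  have : ∀ i ∈ v.support, (c * f i) ^ v i = c ^ v i * f i ^ v i := fun i _ => mul_pow _ _ _
  rw [Finset.prod_congr rfl this, Finset.prod_mul_distrib, Finset.prod_pow_eq_pow_sum, hdeg]
  ring

/-- for a homogeneous polynomial `p` of degree `d` on `ℝ^{n+1}`,
`Δ_{Sⁿ}(p|_{Sⁿ}) = (Δ_{ℝ^{n+1}} p)|_{Sⁿ} − d(d+n−1) p|_{Sⁿ}`. -/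
theorem stmt_7 (n d : ℕ) (p : MvPolynomial (Fin (n + 1)) ℝ)
    (hp : p.IsHomogeneous d) (x : EuclideanSpace ℝ (Fin (n + 1))) (hx : ‖x‖ = 1) :
    sphereLaplacian (fun y => MvPolynomial.eval (fun i => y i) p) x =
      euclideanLaplacian (fun y => MvPolynomial.eval (fun i => y i) p) x -
        (d : ℝ) * (d + n - 1) * MvPolynomial.eval (fun i => x i) p := by
  have hx0 : x ≠ 0 := by
    intro h; rw [h] at hx; simp at hx
  have hev : (fun y : EuclideanSpace ℝ (Fin (n + 1)) =>
      MvPolynomial.eval (fun i => (‖y‖⁻¹ • y) i) p) =ᶠ[nhds x] Fh (-(d : ℝ)/2) p := by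
    filter_upwards [isOpen_compl_singleton.mem_nhds hx0] with y hy
    have hy0 : y ≠ 0 := hy
    have hny : ‖y‖ ≠ 0 := norm_ne_zero_iff.mpr hy0
    have h1 : (fun i => (‖y‖⁻¹ • y) i) = fun i => ‖y‖⁻¹ * y i := rfl
    rw [h1, eval_smul_hom hp]
    have h2 : ev (qpoly n) y ^ (-(d : ℝ)/2) = (‖y‖⁻¹) ^ d := by
      rw [ev_qpoly]
      rw [← Real.rpow_natCast ‖y‖ 2, ← Real.rpow_mul (norm_nonneg y)]
      have : ((2 : ℕ) : ℝ) * (-(d : ℝ)/2) = -(d : ℝ) := by push_cast; ring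
      rw [this, Real.rpow_neg (norm_nonneg y), Real.rpow_natCast, inv_pow]
    rw [Fh, h2]
    rfl
  have hsphere : sphereLaplacian (fun y => MvPolynomial.eval (fun i => y i) p) x
      = euclideanLaplacian
          (fun y : EuclideanSpace ℝ (Fin (n + 1)) =>
            MvPolynomial.eval (fun i => (‖y‖⁻¹ • y) i) p) x := rfl
  rw [hsphere, lap_congr hev, lap_Fh (-(d : ℝ)/2) hp hx]
  have hF0 : (fun y : EuclideanSpace ℝ (Fin (n + 1)) =>
      MvPolynomial.eval (fun i => y i) p) = Fh 0 p := by
    funext y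
    simp [Fh, Real.rpow_zero, ev]
  rw [hF0, lap_Fh 0 hp hx]
  simp only [ev]
  ring
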